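/- Let D: ℝ₊ⁿ → ℝ₊ⁿ be a diagonal homeomorphism D(s) = (D₁(s₁),…,Dₙ(sₙ)) where each Dᵢ: ℝ₊ → ℝ₊ is a continuous strictly increasing bijection, and let Γ: ℝ₊ⁿ → ℝ₊ⁿ be monotone (order-preserving for the componentwise order). Then the condition 'D(Γ(v)) ≱ v for all v ∈ ℝ₊ⁿ \ {0}' is equivalent to 'Γ(D(w)) ≱ w for all w ∈ ℝ₊ⁿ \ {0}'. Here x ≱ y means there exists an index i with xᵢ < yᵢ. -/

import Mathlib

open NNReal

/-- The small gain conditions `D ∘ Γ ≱ id` and `Γ ∘ D ≱ id` are equivalent for a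
diagonal homeomorphism `D` and a monotone operator `Γ`. -/
theorem sg_DGamma_iff_GammaD (n : ℕ) (D : Fin n → ℝ≥0 → ℝ≥0)
    (hD : ∀ i, Continuous (D i) ∧ StrictMono (D i) ∧ Function.Bijective (D i))
    (Γ : (Fin n → ℝ≥0) → Fin n → ℝ≥0) (hΓ : Monotone Γ) :
    (∀ v : Fin n → ℝ≥0, v ≠ 0 → ∃ i, D i (Γ v i) < v i) ↔
    (∀ w : Fin n → ℝ≥0, w ≠ 0 → ∃ i, Γ (fun j => D j (w j)) i < w i) := by
  have h0 : ∀ i, D i 0 = 0 := by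
    intro i
    obtain ⟨x, hx⟩ := (hD i).2.2.2 0
    have h := (hD i).2.1.monotone (zero_le (a := x))
    rw [hx] at h
    exact le_antisymm h zero_le
  constructor
  · intro h w hw
    have hv : (fun j => D j (w j)) ≠ 0 := by
      intro hc
      apply hw
      funext j
      have h1 : D j (w j) = 0 := congrFun hc j
      exact (hD j).2.2.1 (h1.trans (h0 j).symm)
    obtain ⟨i, hi⟩ := h _ hv
    exact ⟨i, (hD i).2.1.lt_iff_lt.mp hi⟩
  · intro h v hv
    set w : Fin n → ℝ≥0 := fun j => Function.invFun (D j) (v j) with hwdef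
    have hDw : ∀ j, D j (w j) = v j := fun j =>
      Function.rightInverse_invFun (hD j).2.2.2 (v j)
    have hw : w ≠ 0 := by
      intro hc
      apply hv
      funext j
      have : w j = 0 := congrFun hc j
      rw [← hDw j, this, h0 j]
      rfl
    obtain ⟨i, hi⟩ := h w hw
    have hveq : (fun j => D j (w j)) = v := funext hDw
    rw [hveq] at hi
    refine ⟨i, ?_⟩
    calc D i (Γ v i) < D i (w i) := (hD i).2.1 hi
      _ = v i := hDw i
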